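/- Suppose (x*, y*) is a local minimizer of the relaxed MPCaC problem and set w* = (x*, y*). Then, given an arbitrary norm ‖·‖ on ℝ^n × ℝ^n × ℝ^{2n}, there exists δ > 0 such that (x*, y*, w*) is the unique global minimizer of the localized proximal problem: minimize f(x) + (1/2)‖(x, y) − (x*, y*)‖₂² over (x, y, w) subject to g(x) ≤ 0, h(x) = 0, θ(y) ≤ 0, w^G − x = 0, w^H − y = 0, y − e ≤ 0, w ∈ W, and ‖(x, y, w) − (x*, y*, w*)‖ ≤ δ. -/

import Mathlib

open Filter Topology
open scoped Classical

noncomputable section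

/-- `ℝⁿ` as a Euclidean space. -/
abbrev E (n : ℕ) : Type := EuclideanSpace ℝ (Fin n)

/-- The constraint function `θ(y) = n − α − eᵀ y` of the relaxed MPCaC problem. -/
def theta {n : ℕ} (α : ℕ) (y : E n) : ℝ := (n : ℝ) - (α : ℝ) - ∑ i, y i

/-- Feasibility for the relaxed MPCaC problem:
`g(x) ≤ 0, h(x) = 0, θ(y) ≤ 0, xᵢ yᵢ = 0, 0 ≤ yᵢ ≤ 1`. -/
def relFeas {n m p : ℕ} (g : E n → Fin m → ℝ) (h : E n → Fin p → ℝ) (α : ℕ)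
    (x y : E n) : Prop :=
  (∀ i, g x i ≤ 0) ∧ (∀ j, h x j = 0) ∧ theta α y ≤ 0 ∧
  (∀ i, x i * y i = 0) ∧ (∀ i, 0 ≤ y i ∧ y i ≤ 1)

/-- `∇f(x) + Σᵢ λᵍᵢ ∇gᵢ(x) + Σⱼ λʰⱼ ∇hⱼ(x)`. -/
def gradLx {n m p : ℕ} (f : E n → ℝ) (g : E n → Fin m → ℝ) (h : E n → Fin p → ℝ)
    (x : E n) (lg : Fin m → ℝ) (lh : Fin p → ℝ) : E n :=
  gradient f x + ∑ i, lg i • gradient (fun z => g z i) x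
    + ∑ j, lh j • gradient (fun z => h z j) x

/-- `i ∈ I_{0+}(x̄,ȳ) ∪ I_{01}(x̄,ȳ)`, i.e. `x̄ᵢ = 0` and (`0 < ȳᵢ < 1` or `ȳᵢ = 1`). -/
def inI0p01 {n : ℕ} (xb yb : E n) (i : Fin n) : Prop :=
  xb i = 0 ∧ ((0 < yb i ∧ yb i < 1) ∨ yb i = 1)

/-- Admissibility of the index set `I`: `I_{0+} ∪ I_{01} ⊆ I ⊆ I_0`. -/
def idxOK {n : ℕ} (xb yb : E n) (I : Finset (Fin n)) : Prop :=
  (∀ i, inI0p01 xb yb i → i ∈ I) ∧ (∀ i ∈ I, xb i = 0)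

/-- Feasibility for the tightened problem `TNLP_I(x̄,ȳ)`:
`g(x) ≤ 0, h(x) = 0, θ(y) ≤ 0, xᵢ = 0 (i ∈ I), −yᵢ ≤ 0 (i ∈ I_{0+} ∪ I_{01}),`
`−yᵢ = 0 (i ∈ I_{00} ∪ I_{±0}), y − e ≤ 0`. Note `I_{00} ∪ I_{±0} = {i | ȳᵢ = 0}`. -/
def tnlpFeas {n m p : ℕ} (g : E n → Fin m → ℝ) (h : E n → Fin p → ℝ) (α : ℕ)
    (xb yb : E n) (I : Finset (Fin n)) (x y : E n) : Prop :=
  (∀ i, g x i ≤ 0) ∧ (∀ j, h x j = 0) ∧ theta α y ≤ 0 ∧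
  (∀ i ∈ I, x i = 0) ∧
  (∀ i, inI0p01 xb yb i → -(y i) ≤ 0) ∧
  (∀ i, yb i = 0 → -(y i) = 0) ∧
  (∀ i, y i - 1 ≤ 0)

/-- `W_I`-stationarity for the relaxed MPCaC problem (Definition 2.9 of the paper). -/
def WStat {n m p : ℕ} (f : E n → ℝ) (g : E n → Fin m → ℝ) (h : E n → Fin p → ℝ)
    (α : ℕ) (xb yb : E n) (I : Finset (Fin n)) : Prop :=
  ∃ (lg : Fin m → ℝ) (lh : Fin p → ℝ) (lθ : ℝ) (lG : Fin n → ℝ) (lH lH' : Fin n → ℝ),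
    (∀ i, 0 ≤ lg i) ∧ 0 ≤ lθ ∧ (∀ i, 0 ≤ lH' i) ∧
    gradLx f g h xb lg lh + ∑ i ∈ I, lG i • EuclideanSpace.single i 1 = 0 ∧
    (∀ i, -lθ - lH i + lH' i = 0) ∧
    (∑ i, lg i * g xb i) = 0 ∧
    lθ * theta α yb = 0 ∧
    (∀ i, inI0p01 xb yb i → lH i = 0) ∧
    (∑ i, lH' i * (yb i - 1)) = 0

/-- Approximate weak (`AW`) stationarity for the relaxed MPCaC problem
(Definition 3.1 of the paper). -/
def AWStat {n m p : ℕ} (f : E n → ℝ) (g : E n → Fin m → ℝ) (h : E n → Fin p → ℝ)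
    (α : ℕ) (xb yb : E n) : Prop :=
  ∃ (x y : ℕ → E n) (lg : ℕ → Fin m → ℝ) (lh : ℕ → Fin p → ℝ) (lθ : ℕ → ℝ)
    (lG : ℕ → E n) (lH lH' : ℕ → Fin n → ℝ),
    (∀ k i, 0 ≤ lg k i) ∧ (∀ k, 0 ≤ lθ k) ∧ (∀ k i, 0 ≤ lH' k i) ∧
    Tendsto x atTop (𝓝 xb) ∧ Tendsto y atTop (𝓝 yb) ∧
    Tendsto (fun k => gradLx f g h (x k) (lg k) (lh k) + lG k) atTop (𝓝 0) ∧
    Tendsto (fun k i => -(lθ k) - lH k i + lH' k i) atTop (𝓝 (0 : Fin n → ℝ)) ∧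
    (∀ i, Tendsto (fun k => min (-(g (x k) i)) (lg k i)) atTop (𝓝 0)) ∧
    Tendsto (fun k => min (-(theta α (y k))) (lθ k)) atTop (𝓝 0) ∧
    (∀ i, Tendsto (fun k => min |x k i| |lG k i|) atTop (𝓝 0)) ∧
    (∀ i, Tendsto (fun k => min (y k i) |lH k i|) atTop (𝓝 0)) ∧
    (∀ i, Tendsto (fun k => min (1 - y k i) (lH' k i)) atTop (𝓝 0))

/-- Feasibility for the augmented problem: `g(x) ≤ 0`, `h(x) = 0`, `θ(y) ≤ 0`,
`w^G − G(x) = 0` (i.e. `w^G = x`), `w^H + H(y) = 0` (i.e. `w^H = y`),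
`y − e ≤ 0`, and `w ∈ W = {(w^G, w^H) | w^H ≥ 0, w^G_i w^H_i = 0 ∀ i}`. -/
def augFeas {n m p : ℕ} (g : E n → Fin m → ℝ) (h : E n → Fin p → ℝ) (α : ℕ)
    (x y wG wH : E n) : Prop :=
  (∀ i, g x i ≤ 0) ∧ (∀ j, h x j = 0) ∧ theta α y ≤ 0 ∧
  wG - x = 0 ∧ wH - y = 0 ∧ (∀ i, y i - 1 ≤ 0) ∧
  (∀ i, 0 ≤ wH i) ∧ (∀ i, wG i * wH i = 0)

/-- Lemma 3.7 of the paper. If `(x*, y*)` is a local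
minimizer of the relaxed MPCaC problem and `w* = (x*, y*)`, then for an
arbitrary norm `nrm` on `ℝⁿ × ℝⁿ × ℝ²ⁿ` there exists `δ > 0` such that
`(x*, y*, w*)` is the unique global minimizer of the localized proximal
problem: minimize `f(x) + ½‖(x,y) − (x*,y*)‖₂²` subject to the augmented
constraints and `nrm((x,y,w) − (x*,y*,w*)) ≤ δ`. -/

lemma nrm_sum_le {V : Type*} [AddCommGroup V] (nrm : V → ℝ)
    (hz : nrm 0 = 0) (h2 : ∀ u v, nrm (u + v) ≤ nrm u + nrm v)
    {ι : Type*} (s : Finset ι) (f : ι → V) :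
    nrm (∑ i ∈ s, f i) ≤ ∑ i ∈ s, nrm (f i) := by
  classical
  induction s using Finset.induction with
  | empty => simp [hz]
  | insert _ _ hi ih =>
    rw [Finset.sum_insert hi, Finset.sum_insert hi]
    exact le_trans (h2 _ _) (by linarith)

lemma norm_equiv_aux {V : Type*} [NormedAddCommGroup V] [NormedSpace ℝ V]
    [FiniteDimensional ℝ V] (nrm : V → ℝ)
    (h0 : ∀ v, nrm v = 0 ↔ v = 0)
    (h1 : ∀ (c : ℝ) v, nrm (c • v) = |c| * nrm v)
    (h2 : ∀ u v, nrm (u + v) ≤ nrm u + nrm v) :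
    ∃ C > 0, ∀ v, ‖v‖ ≤ C * nrm v := by
  have hz : nrm 0 = 0 := (h0 0).2 rfl
  have hneg : ∀ v, nrm (-v) = nrm v := by
    intro v
    have := h1 (-1) v
    simpa using this
  have hnn : ∀ v, 0 ≤ nrm v := by
    intro v
    have : nrm (v + (-v)) ≤ nrm v + nrm (-v) := h2 v (-v)
    rw [add_neg_cancel, hz, hneg] at this
    linarith
  rcases subsingleton_or_nontrivial V with hV | hV
  · exact ⟨1, one_pos, fun v => by
      rw [Subsingleton.elim v 0]; simpa [hz] using le_refl (0:ℝ)⟩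
  -- upper bound nrm v ≤ C₁ ‖v‖
  obtain ⟨C₁, hC₁pos, hup⟩ : ∃ C₁ > 0, ∀ v, nrm v ≤ C₁ * ‖v‖ := by
    set d := Module.finrank ℝ V
    set b := Module.finBasis ℝ V
    set L : V →L[ℝ] (Fin d → ℝ) := LinearMap.toContinuousLinearMap b.equivFun.toLinearMap
    have hs : (0:ℝ) ≤ ∑ i, nrm (b i) := Finset.sum_nonneg fun i _ => hnn _
    refine ⟨‖L‖ * (∑ i, nrm (b i)) + 1,
      by linarith [mul_nonneg (norm_nonneg L) hs], fun v => ?_⟩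
    have hv : v = ∑ i, b.equivFun v i • b i := (b.sum_equivFun v).symm
    have h3 : nrm v ≤ ∑ i, nrm (b.equivFun v i • b i) := by
      conv_lhs => rw [hv]
      exact nrm_sum_le nrm hz h2 _ _
    have h4 : ∀ i : Fin d, nrm (b.equivFun v i • b i) ≤ (‖L‖ * ‖v‖) * nrm (b i) := by
      intro i
      rw [h1]
      have hco : |b.equivFun v i| ≤ ‖L‖ * ‖v‖ := by
        have h5 : ‖(L v) i‖ ≤ ‖L v‖ := norm_le_pi_norm (L v) i
        have h6 : ‖L v‖ ≤ ‖L‖ * ‖v‖ := L.le_opNorm v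
        have : (L v) i = b.equivFun v i := rfl
        rw [this] at h5
        calc |b.equivFun v i| = ‖b.equivFun v i‖ := rfl
          _ ≤ ‖L v‖ := h5
          _ ≤ ‖L‖ * ‖v‖ := h6
      exact mul_le_mul_of_nonneg_right hco (hnn _)
    have h7 : nrm v ≤ ∑ i, (‖L‖ * ‖v‖) * nrm (b i) :=
      le_trans h3 (Finset.sum_le_sum fun i _ => h4 i)
    have h8 : ∑ i, (‖L‖ * ‖v‖) * nrm (b i) = (‖L‖ * (∑ i, nrm (b i))) * ‖v‖ := by
      rw [Finset.mul_sum, Finset.sum_mul]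
      exact Finset.sum_congr rfl fun i _ => by ring
    nlinarith [norm_nonneg v, hnn v]
  -- continuity of nrm
  have hcont : Continuous nrm := by
    apply LipschitzWith.continuous (K := ⟨C₁, hC₁pos.le⟩)
    apply LipschitzWith.of_dist_le_mul
    intro u v
    rw [Real.dist_eq, dist_eq_norm]
    rw [abs_sub_le_iff]
    constructor
    · have := h2 (u - v) v
      rw [sub_add_cancel] at this
      have := hup (u - v)
      change _ ≤ C₁ * _
      linarith
    · have := h2 (v - u) u
      rw [sub_add_cancel] at this
      have h9 := hup (v - u)
      rw [← norm_neg, neg_sub] at h9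
      change _ ≤ C₁ * _
      linarith
  -- min on sphere
  obtain ⟨z, hzs, hzmin⟩ := (isCompact_sphere (0:V) 1).exists_isMinOn
    (NormedSpace.sphere_nonempty.mpr zero_le_one) hcont.continuousOn
  have hznorm : ‖z‖ = 1 := by simpa using hzs
  have hzpos : 0 < nrm z := by
    rcases lt_or_eq_of_le (hnn z) with h | h
    · exact h
    · exfalso
      have : z = 0 := (h0 z).1 h.symm
      rw [this] at hznorm; simp at hznorm
  refine ⟨(nrm z)⁻¹, inv_pos.mpr hzpos, fun v => ?_⟩
  rcases eq_or_ne v 0 with rfl | hv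
  · simp [hz]
  · have hvn : 0 < ‖v‖ := norm_pos_iff.mpr hv
    have hu : ‖v‖⁻¹ • v ∈ Metric.sphere (0:V) 1 := by
      simp [norm_smul, abs_of_pos (inv_pos.mpr hvn), inv_mul_cancel₀ hvn.ne']
    have hmin : nrm z ≤ nrm (‖v‖⁻¹ • v) := hzmin hu
    have heq : nrm (‖v‖⁻¹ • v) = ‖v‖⁻¹ * nrm v := by
      rw [h1, abs_of_pos (inv_pos.mpr hvn)]
    rw [heq, inv_mul_eq_div, le_div_iff₀ hvn] at hmin
    nlinarith [mul_le_mul_of_nonneg_left hmin (inv_nonneg.mpr hzpos.le),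
      inv_mul_cancel₀ hzpos.ne']

theorem relaxed_min_unique_proximal_min {n m p : ℕ}
    (f : E n → ℝ) (g : E n → Fin m → ℝ) (h : E n → Fin p → ℝ) (α : ℕ)
    (hf : ContDiff ℝ 1 f) (hg : ∀ i, ContDiff ℝ 1 (fun x => g x i))
    (hh : ∀ j, ContDiff ℝ 1 (fun x => h x j))
    (nrm : (E n × E n × E n × E n) → ℝ)
    (hnrm0 : ∀ v, nrm v = 0 ↔ v = 0)
    (hnrm1 : ∀ (c : ℝ) v, nrm (c • v) = |c| * nrm v)
    (hnrm2 : ∀ u v, nrm (u + v) ≤ nrm u + nrm v)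
    (xs ys : E n)
    (hloc : (relFeas g h α xs ys) ∧ ∃ δ > (0:ℝ), ∀ x y, relFeas g h α x y →
      ‖(x, y) - (xs, ys)‖ ≤ δ → f xs ≤ f x) :
    ∃ δ > (0:ℝ),
      (augFeas g h α xs ys xs ys ∧
        nrm ((xs, ys, xs, ys) - (xs, ys, xs, ys)) ≤ δ) ∧
      ∀ x y wG wH, augFeas g h α x y wG wH →
        nrm ((x, y, wG, wH) - (xs, ys, xs, ys)) ≤ δ →
        (x, y, wG, wH) ≠ (xs, ys, xs, ys) →
        f xs + (1/2) * (‖xs - xs‖ ^ 2 + ‖ys - ys‖ ^ 2)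
          < f x + (1/2) * (‖x - xs‖ ^ 2 + ‖y - ys‖ ^ 2) := by
  obtain ⟨hfeas, δ₀, hδ₀, hmin⟩ := hloc
  obtain ⟨C, hC, hCle⟩ := norm_equiv_aux nrm hnrm0 hnrm1 hnrm2
  refine ⟨δ₀ / C, div_pos hδ₀ hC, ⟨?_, ?_⟩, ?_⟩
  · obtain ⟨h1, h2, h3, h4, h5⟩ := hfeas
    exact ⟨h1, h2, h3, by simp, by simp, fun i => by linarith [(h5 i).2],
      fun i => (h5 i).1, h4⟩
  · have he : ((xs, ys, xs, ys) - (xs, ys, xs, ys) : E n × E n × E n × E n) = 0 := by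
      simp
    rw [he, (hnrm0 0).2 rfl]
    positivity
  · intro x y wG wH hfe hnr hne
    obtain ⟨hg1, hh1, hth, hwG, hwH, hy1, hwHnn, hprod⟩ := hfe
    have hwGx : wG = x := sub_eq_zero.mp hwG
    have hwHy : wH = y := sub_eq_zero.mp hwH
    have hrel : relFeas g h α x y :=
      ⟨hg1, hh1, hth, fun i => by rw [← hwGx, ← hwHy]; exact hprod i,
        fun i => ⟨by rw [← hwHy]; exact hwHnn i, by linarith [hy1 i]⟩⟩
    have hbig : ‖((x, y, wG, wH) : E n × E n × E n × E n) - (xs, ys, xs, ys)‖ ≤ δ₀ := by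
      calc ‖((x, y, wG, wH) : E n × E n × E n × E n) - (xs, ys, xs, ys)‖
          ≤ C * nrm (((x, y, wG, wH) : E n × E n × E n × E n) - (xs, ys, xs, ys)) :=
            hCle _
        _ ≤ C * (δ₀ / C) := mul_le_mul_of_nonneg_left hnr hC.le
        _ = δ₀ := by field_simp
    have hsmall : ‖((x, y) : E n × E n) - (xs, ys)‖ ≤ δ₀ := by
      refine le_trans ?_ hbig
      show ‖((x - xs, y - ys) : E n × E n)‖ ≤
        ‖((x - xs, y - ys, wG - xs, wH - ys) : E n × E n × E n × E n)‖
      rw [Prod.norm_def, Prod.norm_def, Prod.norm_def, Prod.norm_def]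
      exact max_le (le_max_left _ _)
        ((le_max_left _ _).trans (le_max_right _ _))
    have hfx : f xs ≤ f x := hmin x y hrel hsmall
    have hxy : x ≠ xs ∨ y ≠ ys := by
      by_contra hcon
      push_neg at hcon
      obtain ⟨hx, hy⟩ := hcon
      exact hne (by rw [hwGx, hwHy, hx, hy])
    have hpos : 0 < ‖x - xs‖ ^ 2 + ‖y - ys‖ ^ 2 := by
      rcases hxy with hx | hy
      · have h1 : 0 < ‖x - xs‖ := norm_pos_iff.mpr (sub_ne_zero.mpr hx)
        nlinarith [sq_nonneg ‖y - ys‖]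
      · have h1 : 0 < ‖y - ys‖ := norm_pos_iff.mpr (sub_ne_zero.mpr hy)
        nlinarith [sq_nonneg ‖x - xs‖]
    simp only [sub_self, norm_zero]
    nlinarith
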